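/- Let F be a number field of degree n and D = (I,u) an Arakelov divisor with Hermite constant γ(D) defined as the squared length of the shortest nonzero vector of the lattice uI divided by covol(D)^{2/n}. Then n/|Δ_F|^{1/n} ≤ γ(D) ≤ n·(2/π)^{2r₂/n}. -/

import Mathlib

open NumberField Module FractionalIdeal
open scoped nonZeroDivisors

private lemma absNorm_le_of_mem' {F : Type*} [Field F] [NumberField F]
    {I : FractionalIdeal (𝓞 F)⁰ F} (hI : I ≠ 0) {f : F} (hf : f ∈ I) (hf0 : f ≠ 0) :
    absNorm I ≤ |Algebra.norm ℚ f| := by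
  have hspan : spanSingleton (𝓞 F)⁰ f ≤ I := spanSingleton_le_iff_mem.mpr hf
  have hJle : I⁻¹ * spanSingleton (𝓞 F)⁰ f ≤ 1 := by
    calc I⁻¹ * spanSingleton (𝓞 F)⁰ f ≤ I⁻¹ * I := mul_le_mul_right hspan _
    _ = 1 := by rw [mul_comm]; exact mul_inv_cancel₀ hI
  obtain ⟨J₀, hJ₀⟩ := le_one_iff_exists_coeIdeal.mp hJle
  have hJne : (J₀ : FractionalIdeal (𝓞 F)⁰ F) ≠ 0 := by
    rw [hJ₀]
    exact mul_ne_zero (inv_ne_zero hI) (spanSingleton_ne_zero_iff.mpr hf0)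
  have hfact : I * (J₀ : FractionalIdeal (𝓞 F)⁰ F) = spanSingleton (𝓞 F)⁰ f := by
    rw [hJ₀, ← mul_assoc, mul_inv_cancel₀ hI, one_mul]
  have h1 : (1 : ℚ) ≤ absNorm (J₀ : FractionalIdeal (𝓞 F)⁰ F) := by
    rw [coeIdeal_absNorm]
    have : J₀ ≠ ⊥ := by
      intro h; exact hJne (by rw [h]; simp)
    have : Ideal.absNorm J₀ ≠ 0 := by
      rwa [ne_eq, Ideal.absNorm_eq_zero_iff]
    exact_mod_cast Nat.one_le_iff_ne_zero.mpr this
  calc absNorm I ≤ absNorm I * absNorm (J₀ : FractionalIdeal (𝓞 F)⁰ F) :=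
        le_mul_of_one_le_right (absNorm_nonneg I) h1
  _ = absNorm (spanSingleton (𝓞 F)⁰ f) := by rw [← _root_.map_mul, hfact]
  _ = |Algebra.norm ℚ f| := absNorm_span_singleton (R := 𝓞 F) f


set_option maxHeartbeats 1000000 in
/-- Corollary 4.6. The Hermite constant `γ(D)` of an Arakelov
divisor `D = (I,u)`, namely the squared length of a shortest nonzero vector of
the lattice `uI` divided by `covol(D)^{2/n}`, satisfies
`n/|Δ_F|^{1/n} ≤ γ(D) ≤ n·(2/π)^{2r₂/n}`. -/
theorem hermite_constant_bounds (F : Type*) [Field F] [NumberField F]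
    (I : FractionalIdeal (𝓞 F)⁰ F) (hI : I ≠ 0)
    (u : InfinitePlace F → ℝ) (hu : ∀ w, 0 < u w) :
    (finrank ℚ F : ℝ) / |(discr F : ℝ)| ^ ((1 : ℝ) / (finrank ℚ F)) ≤
        sInf {x : ℝ | ∃ f : F, f ∈ I ∧ f ≠ 0 ∧
            x = ∑ w : InfinitePlace F, (w.mult : ℝ) * (u w * w f) ^ 2} /
          (Real.sqrt |(discr F : ℝ)| * (absNorm I : ℝ) *
            ∏ v : InfinitePlace F, u v ^ v.mult) ^ ((2 : ℝ) / (finrank ℚ F)) ∧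
      sInf {x : ℝ | ∃ f : F, f ∈ I ∧ f ≠ 0 ∧
            x = ∑ w : InfinitePlace F, (w.mult : ℝ) * (u w * w f) ^ 2} /
          (Real.sqrt |(discr F : ℝ)| * (absNorm I : ℝ) *
            ∏ v : InfinitePlace F, u v ^ v.mult) ^ ((2 : ℝ) / (finrank ℚ F)) ≤
        (finrank ℚ F : ℝ) * (2 / Real.pi) ^ ((2 * InfinitePlace.nrComplexPlaces F : ℝ) / (finrank ℚ F)) := by
  classical
  set n : ℕ := finrank ℚ F with hn
  have hn0 : 0 < n := finrank_pos
  have hnR : (0:ℝ) < n := by exact_mod_cast hn0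
  set S := {x : ℝ | ∃ f : F, f ∈ I ∧ f ≠ 0 ∧
      x = ∑ w : InfinitePlace F, (w.mult : ℝ) * (u w * w f) ^ 2} with hS
  set A : ℝ := |(discr F : ℝ)| with hA
  have hA1 : (1:ℝ) ≤ A := by
    rw [hA, ← Int.cast_abs]
    exact_mod_cast Int.one_le_abs (discr_ne_zero F)
  have hA0 : (0:ℝ) < A := lt_of_lt_of_le one_pos hA1
  set P : ℝ := ∏ v : InfinitePlace F, u v ^ v.mult with hP
  have hP0 : 0 < P := Finset.prod_pos fun v _ => pow_pos (hu v) _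
  set NI : ℝ := ((absNorm I : ℚ) : ℝ) with hNI
  have hNI0 : 0 < NI := by
    have h1 : absNorm I ≠ 0 := fun h => hI (absNorm_eq_zero_iff.mp h)
    have := lt_of_le_of_ne (absNorm_nonneg I) (Ne.symm h1)
    rw [hNI]; exact_mod_cast this
  set covol : ℝ := Real.sqrt A * NI * P with hcovol
  have hcovol0 : 0 < covol := by
    rw [hcovol]; positivity
  have hcpow : 0 < covol ^ ((2:ℝ)/n) := Real.rpow_pos_of_pos hcovol0 _
  -- the key per-element lower bound
  have hkey : ∀ x ∈ S, (n:ℝ) * (NI * P) ^ ((2:ℝ)/n) ≤ x := by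
    rintro x ⟨f, hfI, hf0, rfl⟩
    have hwf : ∀ w : InfinitePlace F, 0 ≤ u w * w f :=
      fun w => mul_nonneg (hu w).le (AbsoluteValue.nonneg w.1 f)
    have hsumw : ∑ w : InfinitePlace F, ((w.mult : ℝ)/n) = 1 := by
      rw [← Finset.sum_div]
      rw [div_eq_one_iff_eq (ne_of_gt hnR)]
      exact_mod_cast (InfinitePlace.sum_mult_eq (K := F))
    have amgm := Real.geom_mean_le_arith_mean_weighted Finset.univ
      (fun w : InfinitePlace F => (w.mult : ℝ)/n) (fun w => (u w * w f)^2)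
      (fun w _ => by positivity) hsumw (fun w _ => sq_nonneg _)
    have hprod : ∏ w : InfinitePlace F, ((u w * w f)^2 : ℝ) ^ ((w.mult:ℝ)/n)
        = (P * |(Algebra.norm ℚ f : ℚ)|) ^ ((2:ℝ)/n) := by
      have h1 : ∀ w : InfinitePlace F, ((u w * w f)^2 : ℝ) ^ ((w.mult:ℝ)/n)
          = ((u w * w f)^w.mult : ℝ) ^ ((2:ℝ)/n) := by
        intro w
        rw [← Real.rpow_natCast (u w * w f) 2, ← Real.rpow_natCast (u w * w f) w.mult,
          ← Real.rpow_mul (hwf w), ← Real.rpow_mul (hwf w)]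
        congr 1
        push_cast
        ring
      rw [Finset.prod_congr rfl (fun w _ => h1 w),
        Real.finset_prod_rpow _ _ (fun w _ => pow_nonneg (hwf w) _) _]
      congr 1
      have h2 : ∀ w : InfinitePlace F, (u w * w f) ^ w.mult = u w ^ w.mult * (w f) ^ w.mult :=
        fun w => mul_pow _ _ _
      rw [Finset.prod_congr rfl (fun w _ => h2 w), Finset.prod_mul_distrib, ← hP,
        InfinitePlace.prod_eq_abs_norm f]
    have hNle : NI ≤ ((|(Algebra.norm ℚ f : ℚ)| : ℚ) : ℝ) := by
      rw [hNI]; exact_mod_cast absNorm_le_of_mem' hI hfI hf0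
    have hstep : (n:ℝ) * (NI * P) ^ ((2:ℝ)/n) ≤ (n:ℝ) * (P * |(Algebra.norm ℚ f : ℚ)|) ^ ((2:ℝ)/n) := by
      have : (NI * P : ℝ) ≤ P * |(Algebra.norm ℚ f : ℚ)| := by
        rw [mul_comm]
        push_cast at hNle ⊢
        nlinarith [hP0]
      exact mul_le_mul_of_nonneg_left (Real.rpow_le_rpow (by positivity) this (by positivity)) hnR.le
    refine hstep.trans ?_
    rw [← hprod]
    calc (n:ℝ) * ∏ w : InfinitePlace F, ((u w * w f)^2 : ℝ) ^ ((w.mult:ℝ)/n)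
        ≤ (n:ℝ) * ∑ w : InfinitePlace F, ((w.mult:ℝ)/n) * (u w * w f)^2 :=
          mul_le_mul_of_nonneg_left amgm hnR.le
      _ = ∑ w : InfinitePlace F, (w.mult : ℝ) * (u w * w f) ^ 2 := by
          rw [Finset.mul_sum]
          refine Finset.sum_congr rfl fun w _ => ?_
          field_simp
  have hSne : S.Nonempty := by
    obtain ⟨f₀, hf₀I, hf₀⟩ : ∃ f ∈ I, f ≠ 0 := by
      by_contra h
      push_neg at h
      exact hI (eq_zero_iff.mpr h)
    exact ⟨_, f₀, hf₀I, hf₀, rfl⟩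
  have hbdd : BddBelow S := by
    refine ⟨0, ?_⟩
    rintro x ⟨f, hfI, hf0, rfl⟩
    positivity
  clear_value S A P NI covol
  constructor
  · rw [le_div_iff₀ hcpow]
    refine le_csInf hSne fun x hx => le_trans (le_of_eq ?_) (hkey x hx)
    have h1 : covol ^ ((2:ℝ)/n) = A ^ ((1:ℝ)/n) * (NI*P) ^ ((2:ℝ)/n) := by
      rw [show covol = Real.sqrt A * (NI * P) by rw [hcovol]; ring,
        Real.mul_rpow (Real.sqrt_nonneg _) (by positivity),
        Real.sqrt_eq_rpow, ← Real.rpow_mul hA0.le]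
      congr 2
      field_simp
    rw [h1, ← mul_assoc, div_mul_cancel₀ _ (ne_of_gt (Real.rpow_pos_of_pos hA0 _))]
  · set r1 : ℕ := InfinitePlace.nrRealPlaces F with hr1
    set r2 : ℕ := InfinitePlace.nrComplexPlaces F with hr2
    have hrk : r1 + 2 * r2 = n := InfinitePlace.card_add_two_mul_card_eq_rank F
    clear_value n r1 r2
    have hπ := Real.pi_pos
    set t₀ : ℝ := (2/Real.pi)^r2 * covol with ht₀
    have ht₀0 : 0 < t₀ := mul_pos (pow_pos (div_pos two_pos hπ) r2) hcovol0
    clear_value t₀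
    have hmain : ∀ t : ℝ, t₀ < t → sInf S ≤ n * t ^ ((2:ℝ)/n) := by
      intro t ht
      have ht0 : 0 < t := ht₀0.trans ht
      set c : ℝ := t ^ ((1:ℝ)/(n:ℝ)) with hc
      have hc0 : 0 < c := Real.rpow_pos_of_pos ht0 _
      have hcn : c ^ n = t := by
        rw [hc, ← Real.rpow_natCast (t ^ ((1:ℝ)/(n:ℝ))) n, ← Real.rpow_mul ht0.le,
          one_div_mul_cancel (ne_of_gt hnR), Real.rpow_one]
      have hc2 : c ^ 2 = t ^ ((2:ℝ)/n) := by
        rw [hc, ← Real.rpow_natCast (t ^ ((1:ℝ)/(n:ℝ))) 2, ← Real.rpow_mul ht0.le]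
        congr 1
        push_cast
        ring
      clear_value c
      set I' : (FractionalIdeal (𝓞 F)⁰ F)ˣ := Units.mk0 I hI with hI'
      have hIval : ((I' : FractionalIdeal (𝓞 F)⁰ F)) = I := rfl
      clear_value I'
      set g : InfinitePlace F → NNReal := fun w => Real.toNNReal (c / u w) with hg
      have hgw : ∀ w : InfinitePlace F, ((g w : NNReal) : ℝ) = c / u w := by
        intro w
        rw [hg]
        exact Real.coe_toNNReal _ (le_of_lt (div_pos hc0 (hu w)))
      clear_value g
      have hsummult : ∑ w : InfinitePlace F, w.mult = n := by
        rw [hn]; exact InfinitePlace.sum_mult_eq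
      have hvol : mixedEmbedding.minkowskiBound F I' <
          MeasureTheory.volume (mixedEmbedding.convexBodyLT F g) := by
        rw [mixedEmbedding.convexBodyLT_volume]
        have hfin1 : mixedEmbedding.minkowskiBound F I' ≠ ⊤ :=
          (mixedEmbedding.minkowskiBound_lt_top F I').ne
        have hfin2 : ((mixedEmbedding.convexBodyLTFactor F : ENNReal) *
            ((∏ w : InfinitePlace F, g w ^ w.mult : NNReal) : ENNReal)) ≠ ⊤ :=
          ENNReal.mul_ne_top ENNReal.coe_ne_top ENNReal.coe_ne_top
        rw [← ENNReal.toReal_lt_toReal hfin1 hfin2]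
        have hL : (mixedEmbedding.minkowskiBound F I').toReal
            = NI * ((2:ℝ)⁻¹ ^ r2 * Real.sqrt A) * 2 ^ n := by
          rw [mixedEmbedding.minkowskiBound,
            mixedEmbedding.volume_fundamentalDomain_fractionalIdealLatticeBasis,
            mixedEmbedding.volume_fundamentalDomain_latticeBasis, mixedEmbedding.finrank,
            hIval, ← hn, ← hr2]
          rw [ENNReal.toReal_mul, ENNReal.toReal_mul, ENNReal.toReal_mul,
            ENNReal.toReal_ofReal (Rat.cast_nonneg.mpr (absNorm_nonneg I)),
            ENNReal.toReal_pow, ENNReal.toReal_pow, ENNReal.toReal_inv,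
            ENNReal.toReal_ofNat, ENNReal.coe_toReal, Real.coe_sqrt, coe_nnnorm,
            Int.norm_eq_abs]
          rw [hA, hNI]
        have hprodg : ∏ w : InfinitePlace F, ((g w : NNReal) : ℝ) ^ w.mult = t / P := by
          rw [Finset.prod_congr rfl (fun w (_ : w ∈ Finset.univ) => by rw [hgw w])]
          simp_rw [div_pow]
          rw [Finset.prod_div_distrib, Finset.prod_pow_eq_pow_sum, hsummult, hcn, ← hP]
        have hR : (((mixedEmbedding.convexBodyLTFactor F : ENNReal)) *
            ((∏ w : InfinitePlace F, g w ^ w.mult : NNReal) : ENNReal)).toReal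
            = 2^r1 * Real.pi ^ r2 * (t / P) := by
          rw [ENNReal.toReal_mul, ENNReal.coe_toReal, ENNReal.coe_toReal, NNReal.coe_prod]
          simp_rw [NNReal.coe_pow]
          rw [hprodg]
          congr 1
          rw [mixedEmbedding.convexBodyLTFactor, hr1, hr2]
          push_cast
          rw [NNReal.coe_real_pi]
        rw [hL, hR]
        have hEq : NI * ((2:ℝ)⁻¹ ^ r2 * Real.sqrt A) * 2 ^ n
            = 2^r1 * Real.pi ^ r2 * (t₀ / P) := by
          rw [ht₀, hcovol, ← hrk, pow_add, pow_mul]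
          field_simp
          ring_nf
          rw [show (4:ℝ) = 2 ^ 2 by norm_num, ← pow_mul, mul_comm 2 r2]
          rw [← mul_pow, mul_inv_cancel₀ hπ.ne', one_pow, one_mul, mul_comm r2 2, pow_mul, ← mul_pow]; norm_num
        rw [hEq]
        exact mul_lt_mul_of_pos_left ((div_lt_div_iff_of_pos_right hP0).mpr ht)
          (mul_pos (pow_pos two_pos r1) (pow_pos hπ r2))
      obtain ⟨a, haI, ha0, haw⟩ := mixedEmbedding.exists_ne_zero_mem_ideal_lt F I' hvol
      clear hvol
      have haI' : a ∈ I := hIval ▸ haI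
      have hval : (∑ w : InfinitePlace F, (w.mult : ℝ) * (u w * w a) ^ 2) ≤ n * t ^ ((2:ℝ)/n) := by
        have hle : ∀ w : InfinitePlace F, (u w * w a) ^ 2 ≤ c ^ 2 := by
          intro w
          have h1 : u w * w a < c := by
            have := haw w
            rw [hgw w] at this
            calc u w * w a < u w * (c / u w) := by
                  exact mul_lt_mul_of_pos_left this (hu w)
            _ = c := by rw [← mul_div_assoc]; exact mul_div_cancel_left₀ c (ne_of_gt (hu w))
          have h2 : 0 ≤ u w * w a := mul_nonneg (hu w).le (AbsoluteValue.nonneg w.1 a)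
          exact pow_le_pow_left₀ h2 h1.le 2
        calc ∑ w : InfinitePlace F, (w.mult : ℝ) * (u w * w a) ^ 2
            ≤ ∑ w : InfinitePlace F, (w.mult : ℝ) * c ^ 2 := by
              refine Finset.sum_le_sum fun w _ => ?_
              exact mul_le_mul_of_nonneg_left (hle w) (by positivity)
          _ = n * t ^ ((2:ℝ)/n) := by
              rw [← Finset.sum_mul, ← hc2]
              congr 1
              have hsm := InfinitePlace.sum_mult_eq (K := F)
              rw [hn]
              exact_mod_cast hsm
      refine le_trans (csInf_le hbdd ?_) hval
      rw [hS]
      exact ⟨a, haI', ha0, rfl⟩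
    have hlim : sInf S ≤ n * t₀ ^ ((2:ℝ)/n) := by
      have hcont : Filter.Tendsto (fun t : ℝ => (n:ℝ) * t ^ ((2:ℝ)/n))
          (nhdsWithin t₀ (Set.Ioi t₀)) (nhds ((n:ℝ) * t₀ ^ ((2:ℝ)/n))) := by
        apply Filter.Tendsto.const_mul
        exact (Real.continuousAt_rpow_const t₀ _ (Or.inl ht₀0.ne')).continuousWithinAt
      exact ge_of_tendsto hcont (Filter.eventually_of_mem self_mem_nhdsWithin fun t ht => hmain t ht)
    rw [div_le_iff₀ hcpow]
    refine hlim.trans (le_of_eq ?_)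
    rw [ht₀, Real.mul_rpow (pow_nonneg (le_of_lt (div_pos two_pos hπ)) r2) hcovol0.le,
      ← Real.rpow_natCast (2/Real.pi) r2, ← Real.rpow_mul (by positivity)]
    rw [mul_assoc]
    congr 2
    push_cast
    ring
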